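/- For a short exact sequence 0 → G₁ → G₂ → G₃ → 0 of towers of abelian groups indexed by ℕ, there is a six-term exact sequence 0 → lim G₁ → lim G₂ → lim G₃ → lim¹ G₁ → lim¹ G₂ → lim¹ G₃ → 0 of abelian groups. -/
import Mathlib


/-- The limit of a tower of abelian groups, as a subgroup of the product. -/
def addTowerLimit (A : ℕ → Type) [∀ n, AddCommGroup (A n)] (a : ∀ n, A (n + 1) →+ A n) :
    AddSubgroup (∀ n, A n) where
  carrier := {x | ∀ n, a n (x (n + 1)) = x n}
  zero_mem' := by intro n; simp
  add_mem' := by intro u v hu hv n; simp [hu n, hv n]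
  neg_mem' := by intro u hu n; simp [hu n]

/-- The map `∂ : ∏ₙ Aₙ → ∏ₙ Aₙ`, `(x_n) ↦ (x_n − a_{n+1}(x_{n+1}))`, whose kernel and
cokernel are `lim` and `lim¹` of the tower. -/
def delT (A : ℕ → Type) [∀ n, AddCommGroup (A n)] (a : ∀ n, A (n + 1) →+ A n) :
    (∀ n, A n) →+ (∀ n, A n) :=
  AddMonoidHom.mk' (fun x n => x n - a n (x (n + 1))) (by
    intro u v; funext n; simp; abel)

/-- The coordinatewise map on products induced by a map of towers. -/
def piMap {A B : ℕ → Type} [∀ n, AddCommGroup (A n)] [∀ n, AddCommGroup (B n)]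
    (f : ∀ n, A n →+ B n) : (∀ n, A n) →+ (∀ n, B n) :=
  AddMonoidHom.mk' (fun x n => f n (x n)) (by intro u v; funext n; simp)

/-- The map `lim A → lim B` induced by a map of towers. -/
def limMap {A B : ℕ → Type} [∀ n, AddCommGroup (A n)] [∀ n, AddCommGroup (B n)]
    (a : ∀ n, A (n + 1) →+ A n) (b : ∀ n, B (n + 1) →+ B n)
    (f : ∀ n, A n →+ B n) (hf : ∀ n x, b n (f (n + 1) x) = f n (a n x)) :
    addTowerLimit A a →+ addTowerLimit B b :=
  AddMonoidHom.mk'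
    (fun x => ⟨fun n => f n (x.1 n), fun n => by rw [hf n, x.2 n]⟩)
    (by intro u v; exact Subtype.ext (funext fun n => map_add (f n) _ _))

/-- The map `lim¹ A → lim¹ B` induced by a map of towers. -/
def lim1Map {A B : ℕ → Type} [∀ n, AddCommGroup (A n)] [∀ n, AddCommGroup (B n)]
    (a : ∀ n, A (n + 1) →+ A n) (b : ∀ n, B (n + 1) →+ B n)
    (f : ∀ n, A n →+ B n) (hf : ∀ n x, b n (f (n + 1) x) = f n (a n x)) :
    ((∀ n, A n) ⧸ (delT A a).range) →+ ((∀ n, B n) ⧸ (delT B b).range) :=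
  QuotientAddGroup.map _ _ (piMap f) (by
    rintro x ⟨y, rfl⟩
    exact ⟨piMap f y, by funext n; simp [delT, piMap, hf n, map_sub]⟩)

/-- For a levelwise short exact sequence of towers of abelian groups
`0 → A → B → C → 0`, there is a six-term exact sequence
`0 → lim A → lim B → lim C → lim¹ A → lim¹ B → lim¹ C → 0`,
whose maps (other than the connecting map) are the induced ones. -/
theorem stmt_19 (A B C : ℕ → Type)
    [∀ n, AddCommGroup (A n)] [∀ n, AddCommGroup (B n)] [∀ n, AddCommGroup (C n)]
    (a : ∀ n, A (n + 1) →+ A n) (b : ∀ n, B (n + 1) →+ B n) (c : ∀ n, C (n + 1) →+ C n)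
    (f : ∀ n, A n →+ B n) (g : ∀ n, B n →+ C n)
    (hfa : ∀ n x, b n (f (n + 1) x) = f n (a n x))
    (hgb : ∀ n x, c n (g (n + 1) x) = g n (b n x))
    (hinj : ∀ n, Function.Injective (f n))
    (hsurj : ∀ n, Function.Surjective (g n))
    (hex : ∀ n, (f n).range = (g n).ker) :
    ∃ delta : addTowerLimit C c →+ ((∀ n, A n) ⧸ (delT A a).range),
      Function.Injective (limMap a b f hfa) ∧
      Function.Exact (limMap a b f hfa) (limMap b c g hgb) ∧
      Function.Exact (limMap b c g hgb) delta ∧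
      Function.Exact delta (lim1Map a b f hfa) ∧
      Function.Exact (lim1Map a b f hfa) (lim1Map b c g hgb) ∧
      Function.Surjective (lim1Map b c g hgb) := by
    classical
  have hgf : ∀ n x, g n (f n x) = 0 := fun n x => by
    have : f n x ∈ (g n).ker := by rw [← hex n]; exact ⟨x, rfl⟩
    exact this
  have glift : ∀ (x : ∀ n, C n), ∃ y : ∀ n, B n, ∀ n, g n (y n) = x n :=
    fun x => ⟨fun n => (hsurj n (x n)).choose, fun n => (hsurj n (x n)).choose_spec⟩
  have fpre : ∀ (v : ∀ n, B n), (∀ n, g n (v n) = 0) →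
      ∃ w : ∀ n, A n, ∀ n, f n (w n) = v n := by
    intro v hv
    have h : ∀ n, ∃ w, f n w = v n := fun n => by
      have : v n ∈ (g n).ker := hv n
      rw [← hex n] at this; exact this
    exact ⟨fun n => (h n).choose, fun n => (h n).choose_spec⟩
  have hdelT : ∀ (y : ∀ n, B n) (n : ℕ), delT B b y n = y n - b n (y (n + 1)) := fun y n => rfl
  have hdelTA : ∀ (w : ∀ n, A n) (n : ℕ), delT A a w n = w n - a n (w (n + 1)) := fun w n => rfl
  have hdelTC : ∀ (t : ∀ n, C n) (n : ℕ), delT C c t n = t n - c n (t (n + 1)) := fun t n => rfl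
  have key : ∀ x : addTowerLimit C c, ∃ (y : ∀ n, B n) (z : ∀ n, A n),
      (∀ n, g n (y n) = x.1 n) ∧ (∀ n, f n (z n) = delT B b y n) := by
    intro x
    obtain ⟨y, hy⟩ := glift x.1
    obtain ⟨z, hz⟩ := fpre (delT B b y) (fun n => by
      rw [hdelT, map_sub, hy n, ← hgb n, hy (n + 1), x.2 n, sub_self])
    exact ⟨y, z, hy, hz⟩
  have wd : ∀ (x : addTowerLimit C c) (y y' : ∀ n, B n) (z z' : ∀ n, A n),
      (∀ n, g n (y n) = x.1 n) → (∀ n, f n (z n) = delT B b y n) →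
      (∀ n, g n (y' n) = x.1 n) → (∀ n, f n (z' n) = delT B b y' n) →
      z' - z ∈ (delT A a).range := by
    intro x y y' z z' hy hz hy' hz'
    obtain ⟨w, hw⟩ := fpre (y' - y) (fun n => by
      simp only [Pi.sub_apply, map_sub, hy n, hy' n, sub_self])
    refine ⟨w, ?_⟩
    funext n
    apply hinj n
    rw [hdelTA, map_sub, ← hfa n, hw (n + 1),
      show (z' - z) n = z' n - z n from rfl, map_sub, hz n, hz' n, hdelT, hdelT, hw n]
    simp only [Pi.sub_apply, map_sub]
    abel
  set dfun : addTowerLimit C c → ((∀ n, A n) ⧸ (delT A a).range) :=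
    fun x => QuotientAddGroup.mk (key x).choose_spec.choose with hdfun
  have dspec : ∀ (x : addTowerLimit C c) (y : ∀ n, B n) (z : ∀ n, A n),
      (∀ n, g n (y n) = x.1 n) → (∀ n, f n (z n) = delT B b y n) →
      dfun x = QuotientAddGroup.mk z := by
    intro x y z hy hz
    obtain ⟨hy0, hz0⟩ := (key x).choose_spec.choose_spec
    exact (QuotientAddGroup.eq).mpr (by
      rw [neg_add_eq_sub]
      exact wd x (key x).choose y (key x).choose_spec.choose z hy0 hz0 hy hz)
  have dadd : ∀ u v, dfun (u + v) = dfun u + dfun v := by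
    intro u v
    obtain ⟨y1, z1, hy1, hz1⟩ := key u
    obtain ⟨y2, z2, hy2, hz2⟩ := key v
    rw [dspec u y1 z1 hy1 hz1, dspec v y2 z2 hy2 hz2,
      dspec (u + v) (y1 + y2) (z1 + z2)
        (fun n => by simp [map_add, hy1 n, hy2 n])
        (fun n => by
          rw [Pi.add_apply, map_add, hz1 n, hz2 n, map_add]; rfl)]
    rfl
  refine ⟨AddMonoidHom.mk' dfun dadd, ?_, ?_, ?_, ?_, ?_, ?_⟩
  · -- injectivity of limMap f
    intro u v huv
    apply Subtype.ext; funext n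
    apply hinj n
    exact congrFun (congrArg Subtype.val huv) n
  · -- exact at lim B
    intro y
    constructor
    · intro hy
      have hy' : ∀ n, g n (y.1 n) = 0 := fun n =>
        congrFun (congrArg Subtype.val hy) n
      obtain ⟨w, hw⟩ := fpre y.1 hy'
      have hwlim : ∀ n, a n (w (n + 1)) = w n := by
        intro n
        apply hinj n
        rw [← hfa n, hw (n + 1), y.2 n, hw n]
      exact ⟨⟨w, hwlim⟩, Subtype.ext (funext fun n => hw n)⟩
    · rintro ⟨u, rfl⟩
      exact Subtype.ext (funext fun n => hgf n (u.1 n))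
  · -- exact at lim C
    intro x
    show dfun x = 0 ↔ _
    constructor
    · intro hx
      obtain ⟨y, z, hy, hz⟩ := key x
      rw [dspec x y z hy hz] at hx
      obtain ⟨w, hw⟩ := (QuotientAddGroup.eq_zero_iff z).mp hx
      have hmem : ∀ n, b n (y (n + 1) - f (n + 1) (w (n + 1))) = y n - f n (w n) := by
        intro n
        have h2 : z n = w n - a n (w (n + 1)) := by rw [← hw]; exact hdelTA w n
        have h3 : f n (w n) - f n (a n (w (n + 1))) = y n - b n (y (n + 1)) := by
          rw [← map_sub, ← h2, hz n, hdelT]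
        rw [map_sub, hfa n]
        rw [sub_eq_sub_iff_add_eq_add] at h3 ⊢
        rw [add_comm]
        exact h3
      refine ⟨⟨fun n => y n - f n (w n), hmem⟩, ?_⟩
      apply Subtype.ext; funext n
      show g n (y n - f n (w n)) = x.1 n
      rw [map_sub, hgf n, sub_zero, hy n]
    · rintro ⟨u, rfl⟩
      rw [dspec _ u.1 0 (fun n => rfl) (fun n => by
        rw [hdelT, u.2 n, sub_self]; simp)]
      simp
  · -- exact at lim¹ A
    intro q
    constructor
    · intro hq
      obtain ⟨z, rfl⟩ := QuotientAddGroup.mk_surjective q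
      have : piMap f z ∈ (delT B b).range :=
        (QuotientAddGroup.eq_zero_iff (piMap f z)).mp hq
      obtain ⟨y, hy⟩ := this
      have hxlim : ∀ n, c n (g (n + 1) (y (n + 1))) = g n (y n) := by
        intro n
        have h1 : y n - b n (y (n + 1)) = f n (z n) := by rw [← hdelT, hy]; rfl
        rw [hgb n]
        have : b n (y (n + 1)) = y n - f n (z n) := by
          rw [eq_sub_iff_add_eq, ← h1]; abel
        rw [this, map_sub, hgf n, sub_zero]
      refine ⟨⟨fun n => g n (y n), hxlim⟩, ?_⟩
      show dfun _ = _
      exact dspec _ y z (fun n => rfl) (fun n => by rw [hy]; rfl)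
    · rintro ⟨x, rfl⟩
      obtain ⟨y, z, hy, hz⟩ := key x
      show lim1Map a b f hfa (dfun x) = 0
      rw [dspec x y z hy hz]
      show QuotientAddGroup.mk (piMap f z) = 0
      rw [QuotientAddGroup.eq_zero_iff]
      exact ⟨y, funext fun n => (hz n).symm⟩
  · -- exact at lim¹ B
    intro q
    obtain ⟨y, rfl⟩ := QuotientAddGroup.mk_surjective q
    constructor
    · intro hq
      have : piMap g y ∈ (delT C c).range :=
        (QuotientAddGroup.eq_zero_iff (piMap g y)).mp hq
      obtain ⟨t, ht⟩ := this
      obtain ⟨u, hu⟩ := glift t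
      obtain ⟨z, hz⟩ := fpre (y - delT B b u) (fun n => by
        have h1 : g n (y n) = t n - c n (t (n + 1)) := by rw [← hdelTC, ht]; rfl
        have h2 : g n (delT B b u n) = t n - c n (t (n + 1)) := by
          rw [hdelT, map_sub, hu n, ← hgb n, hu (n + 1)]
        rw [Pi.sub_apply, map_sub, h1, h2, sub_self])
      refine ⟨QuotientAddGroup.mk z, ?_⟩
      show QuotientAddGroup.mk (piMap f z) = QuotientAddGroup.mk y
      apply (QuotientAddGroup.eq).mpr
      refine ⟨u, ?_⟩
      funext n
      have := hz n
      rw [Pi.sub_apply] at this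
      show delT B b u n = -piMap f z n + y n
      rw [show piMap f z n = f n (z n) from rfl, this]
      abel
    · rintro ⟨p, hp⟩
      obtain ⟨z, rfl⟩ := QuotientAddGroup.mk_surjective p
      rw [← hp]
      show QuotientAddGroup.mk (piMap g (piMap f z)) = 0
      rw [QuotientAddGroup.eq_zero_iff]
      have : piMap g (piMap f z) = 0 := funext fun n => hgf n (z n)
      rw [this]; exact zero_mem _
  · -- surjectivity of lim1Map g
    intro q
    obtain ⟨t, rfl⟩ := QuotientAddGroup.mk_surjective q
    obtain ⟨u, hu⟩ := glift t
    exact ⟨QuotientAddGroup.mk u, congrArg QuotientAddGroup.mk (funext fun n => hu n)⟩
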